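/- (Relation between the Szegő–Radon kernel and the Szegő kernel.) Let t, s ∈ ℝ^m be unit vectors with ⟨t,s⟩ = 0, τ := ι(t) + i·ι(s), τ† := -ι(t) + i·ι(s) ∈ Cl, τ†_v := -t + i·s ∈ ℂ^m, ⟨u,τ⟩ := ⟨u,t⟩ + i⟨u,s⟩, ⟨ω,τ†⟩ := -⟨ω,t⟩ + i⟨ω,s⟩. For z, w ∈ ℂ^m write (z,w) := ∑_{j=1}^m z_j w_j for the complex bilinear pairing, and let S(z,ω) := (Γ(m/2)/(2π^{m/2})) · (1 + ι(z)·ι(ω)) · (1 + (z,z) - 2(z,ω))^{-m/2} ∈ Cl be the (complexified) Szegő kernel, where the power is the principal complex power. Then for every u ∈ ℝ^m with |u| < 1 and every ω ∈ S^{m-1}, setting z := -(1/2)⟨u,τ⟩·τ†_v, one has (τ·τ†/4) · S(z,ω) = (τ·τ†/4) · (Γ(m/2)/(2π^{m/2})) · (1 + ⟨u,τ⟩⟨ω,τ†⟩)^{-m/2}; that is, the Szegő–Radon kernel K_τ(u,ω) := (τ·τ†/4)(Γ(m/2)/(2π^{m/2}))(1+⟨u,τ⟩⟨ω,τ†⟩)^{-m/2}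 satisfies K_τ(u,ω) = (τ·τ†/4)·S(-(1/2)⟨u,τ⟩τ†_v, ω). -/

import Mathlib

open MeasureTheory

noncomputable section

/-- The quadratic form `Q(z) = -∑ z_j²` on `ℂ^m`. -/
def Qf (m : ℕ) : QuadraticForm ℂ (Fin m → ℂ) :=
  QuadraticMap.weightedSumSquares ℂ (fun _ : Fin m => (-1 : ℂ))

/-- The complex Clifford algebra `ℂ_m`. -/
abbrev Cl (m : ℕ) := CliffordAlgebra (Qf m)

/-- The canonical embedding `ι : ℂ^m → Cl`. -/
def ιC {m : ℕ} (z : Fin m → ℂ) : Cl m := CliffordAlgebra.ι (Qf m) z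

/-- A real vector of `ℝ^m` regarded as an element of `ℂ^m`. -/
def cVec {m : ℕ} (x : EuclideanSpace ℝ (Fin m)) : Fin m → ℂ := fun j => (x j : ℂ)

/-- `τ = ι(t) + i ι(s)`. -/
def tau {m : ℕ} (t s : EuclideanSpace ℝ (Fin m)) : Cl m :=
  ιC (cVec t) + Complex.I • ιC (cVec s)

/-- `τ† = -ι(t) + i ι(s)`, the Hermitian conjugate of `τ`. -/
def taud {m : ℕ} (t s : EuclideanSpace ℝ (Fin m)) : Cl m :=
  -ιC (cVec t) + Complex.I • ιC (cVec s)

/-- The complex pairing `⟨x,τ⟩ = ⟨x,t⟩ + i⟨x,s⟩` for `x ∈ ℝ^m`. -/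
def pairTau {m : ℕ} (t s x : EuclideanSpace ℝ (Fin m)) : ℂ :=
  ((inner ℝ x t : ℝ) : ℂ) + Complex.I * ((inner ℝ x s : ℝ) : ℂ)

/-- The complex pairing `⟨x,τ†⟩ = -⟨x,t⟩ + i⟨x,s⟩` for `x ∈ ℝ^m`. -/
def pairTaud {m : ℕ} (t s x : EuclideanSpace ℝ (Fin m)) : ℂ :=
  -((inner ℝ x t : ℝ) : ℂ) + Complex.I * ((inner ℝ x s : ℝ) : ℂ)

/-- The generator `e_j = ι(ε_j)`. -/
def gen {m : ℕ} (j : Fin m) : Cl m := ιC (Pi.single j 1)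

/-- The Bargmann–Radon kernel `B_τ(u,x) = (τ τ†/4) exp(-(1/2)⟨u,τ⟩⟨x,τ†⟩)`. -/
def BKer {m : ℕ} (t s u x : EuclideanSpace ℝ (Fin m)) : Cl m :=
  ((4 : ℂ)⁻¹ * Complex.exp (-(1 / 2 : ℂ) * pairTau t s u * pairTaud t s x)) •
    (tau t s * taud t s)

/-- A real vector of `ℝ^m` regarded as an element of the Hermitian space `ℂ^m`. -/
def toC {m : ℕ} (x : EuclideanSpace ℝ (Fin m)) : EuclideanSpace ℂ (Fin m) :=
  WithLp.toLp 2 (fun j => (x j : ℂ))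

/-- `F : ℂ^m → Cl` is (left) monogenic: `∑_j e_j ∂F/∂z_j = 0`. -/
def MonogenicC {m : ℕ} [NormedAddCommGroup (Cl m)] [NormedSpace ℂ (Cl m)]
    (F : EuclideanSpace ℂ (Fin m) → Cl m) : Prop :=
  ∀ z, ∑ j : Fin m, gen j * fderiv ℂ F z (EuclideanSpace.single j 1) = 0

/-- The Bargmann–Radon operator `P`. -/
def Pop {m : ℕ} [NormedAddCommGroup (Cl m)] [NormedSpace ℂ (Cl m)]
    (t s : EuclideanSpace ℝ (Fin m)) (f : EuclideanSpace ℝ (Fin m) → Cl m) :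
    EuclideanSpace ℝ (Fin m) → Cl m := fun u =>
  ((2 * Real.pi) ^ (-(m : ℝ) / 2)) •
    ∫ x : EuclideanSpace ℝ (Fin m), Real.exp (-‖x‖ ^ 2 / 2) • (BKer t s u x * f x)

/-- The nullcone vector `τ† = -t + i s ∈ ℂ^m`. -/
def taudVec {m : ℕ} (t s : EuclideanSpace ℝ (Fin m)) : EuclideanSpace ℂ (Fin m) :=
  WithLp.toLp 2 (fun j => -(t j : ℂ) + Complex.I * (s j : ℂ))

/-- Embedding `ι` on elements of the Hermitian space `ℂ^m`. -/
def ιE {m : ℕ} (z : EuclideanSpace ℂ (Fin m)) : Cl m := ιC (fun j => z j)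

/-- The complex bilinear pairing `(z,w) = ∑_j z_j w_j`. -/
def bil {m : ℕ} (z w : EuclideanSpace ℂ (Fin m)) : ℂ := ∑ j, z j * w j

/-- The complexified Szegő kernel `S(z,ω)`. -/
def SzegoKer (m : ℕ) (z : EuclideanSpace ℂ (Fin m)) (ω : EuclideanSpace ℝ (Fin m)) : Cl m :=
  (((Real.Gamma ((m : ℝ) / 2) / (2 * Real.pi ^ ((m : ℝ) / 2)) : ℝ) : ℂ) *
      (1 + bil z z - 2 * bil z (toC ω)) ^ (-(m : ℂ) / 2)) •
    (1 + ιE z * ιE (toC ω))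


lemma key_sum {m : ℕ} (t s : EuclideanSpace ℝ (Fin m)) (ht : ‖t‖ = 1) (hs : ‖s‖ = 1)
    (hts : inner ℝ t s = (0 : ℝ)) :
    ∑ j, (-(t j : ℂ) + Complex.I * (s j : ℂ)) * (-(t j : ℂ) + Complex.I * (s j : ℂ)) = 0 := by
  have h1 : ∑ j, t j * t j = 1 := by
    have := EuclideanSpace.norm_sq_eq t
    rw [ht] at this
    simp only [Real.norm_eq_abs, sq_abs, one_pow] at this
    rw [this]; exact Finset.sum_congr rfl fun j _ => (sq (t j)).symm
  have h3 : ∑ j, s j * s j = 1 := by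
    have := EuclideanSpace.norm_sq_eq s
    rw [hs] at this
    simp only [Real.norm_eq_abs, sq_abs, one_pow] at this
    rw [this]; exact Finset.sum_congr rfl fun j _ => (sq (s j)).symm
  have h2 : ∑ j, t j * s j = 0 := by
    simpa [PiLp.inner_apply, RCLike.inner_apply, mul_comm] using hts
  have e : ∀ j, (-(t j : ℂ) + Complex.I * (s j : ℂ)) * (-(t j : ℂ) + Complex.I * (s j : ℂ))
      = ((t j * t j : ℝ) : ℂ) - 2 * Complex.I * ((t j * s j : ℝ) : ℂ) - ((s j * s j : ℝ) : ℂ) := by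
    intro j
    push_cast
    linear_combination ((s j : ℂ))^2 * Complex.I_sq
  calc ∑ j, (-(t j : ℂ) + Complex.I * (s j : ℂ)) * (-(t j : ℂ) + Complex.I * (s j : ℂ))
      = ∑ j, (((t j * t j : ℝ) : ℂ) - 2 * Complex.I * ((t j * s j : ℝ) : ℂ)
          - ((s j * s j : ℝ) : ℂ)) := Finset.sum_congr rfl fun j _ => e j
    _ = ((∑ j, t j * t j : ℝ) : ℂ) - 2 * Complex.I * ((∑ j, t j * s j : ℝ) : ℂ)
          - ((∑ j, s j * s j : ℝ) : ℂ) := by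
        rw [Finset.sum_sub_distrib, Finset.sum_sub_distrib, ← Finset.mul_sum]
        push_cast
        ring
    _ = 0 := by rw [h1, h2, h3]; push_cast; ring

lemma taud_eq {m : ℕ} (t s : EuclideanSpace ℝ (Fin m)) :
    taud t s = ιC (fun j => -(t j : ℂ) + Complex.I * (s j : ℂ)) := by
  unfold taud ιC cVec
  rw [← LinearMap.map_smul, ← map_neg, ← map_add]
  congr 1

lemma taud_sq {m : ℕ} (t s : EuclideanSpace ℝ (Fin m)) (ht : ‖t‖ = 1) (hs : ‖s‖ = 1)
    (hts : inner ℝ t s = (0 : ℝ)) : taud t s * taud t s = 0 := by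
  rw [taud_eq, ιC, CliffordAlgebra.ι_sq_scalar]
  have : Qf m (fun j => -(t j : ℂ) + Complex.I * (s j : ℂ)) = 0 := by
    rw [Qf, QuadraticMap.weightedSumSquares_apply]
    simp only [neg_smul, one_smul]
    rw [Finset.sum_neg_distrib, key_sum t s ht hs hts, neg_zero]
  rw [this, map_zero]

theorem stmt11 (m : ℕ) (hm : 2 ≤ m)
    (t s : EuclideanSpace ℝ (Fin m)) (ht : ‖t‖ = 1) (hs : ‖s‖ = 1)
    (hts : inner ℝ t s = (0 : ℝ))
    (u : EuclideanSpace ℝ (Fin m)) (hu : ‖u‖ < 1)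
    (ω : EuclideanSpace ℝ (Fin m)) (hω : ‖ω‖ = 1) :
    ((4 : ℂ)⁻¹ • (tau t s * taud t s)) *
        SzegoKer m ((-(1 / 2 : ℂ) * pairTau t s u) • taudVec t s) ω =
      (((Real.Gamma ((m : ℝ) / 2) / (2 * Real.pi ^ ((m : ℝ) / 2)) : ℝ) : ℂ) *
          (1 + pairTau t s u * pairTaud t s ω) ^ (-(m : ℂ) / 2)) •
        ((4 : ℂ)⁻¹ • (tau t s * taud t s)) := by
  have hw := key_sum t s ht hs hts
  set c : ℂ := -(1 / 2 : ℂ) * pairTau t s u with hc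
  set z : EuclideanSpace ℂ (Fin m) := c • taudVec t s with hz
  have hzj : ∀ j, z j = c * (-(t j : ℂ) + Complex.I * (s j : ℂ)) := by
    intro j; rw [hz]; simp [taudVec]
  have hbz : bil z z = 0 := by
    have : bil z z = c * c * ∑ j, (-(t j : ℂ) + Complex.I * (s j : ℂ)) *
        (-(t j : ℂ) + Complex.I * (s j : ℂ)) := by
      rw [bil, Finset.mul_sum]
      exact Finset.sum_congr rfl fun j _ => by rw [hzj]; ring
    rw [this, hw, mul_zero]
  have hit : (inner ℝ ω t : ℝ) = ∑ j, t j * ω j := by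
    simp [PiLp.inner_apply, RCLike.inner_apply, mul_comm]
  have his : (inner ℝ ω s : ℝ) = ∑ j, s j * ω j := by
    simp [PiLp.inner_apply, RCLike.inner_apply, mul_comm]
  have hbzw : bil z (toC ω) = c * pairTaud t s ω := by
    calc bil z (toC ω)
        = ∑ j, c * ((-(t j : ℂ) + Complex.I * (s j : ℂ)) * (ω j : ℂ)) := by
          rw [bil]
          exact Finset.sum_congr rfl fun j _ => by rw [hzj, toC]; simp only [PiLp.toLp_apply]; ring
      _ = c * ∑ j, (-(t j : ℂ) + Complex.I * (s j : ℂ)) * (ω j : ℂ) := by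
          rw [Finset.mul_sum]
      _ = c * pairTaud t s ω := by
          congr 1
          rw [pairTaud, hit, his]
          push_cast
          simp only [add_mul, neg_mul, mul_assoc]
          rw [Finset.sum_add_distrib, Finset.sum_neg_distrib, ← Finset.mul_sum]
  have hiz : ιE z = c • taud t s := by
    rw [taud_eq, ιE, ιC, ιC, ← LinearMap.map_smul]
    congr 1
  rw [SzegoKer, hbz, hbzw, hiz]
  have hscal : (1 : ℂ) + 0 - 2 * (c * pairTaud t s ω)
      = 1 + pairTau t s u * pairTaud t s ω := by
    rw [hc]; ring
  rw [hscal, mul_smul_comm]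
  congr 1
  have h0 : tau t s * taud t s * (taud t s * ιE (toC ω)) = 0 := by
    rw [← mul_assoc, mul_assoc (tau t s), taud_sq t s ht hs hts, mul_zero, zero_mul]
  rw [mul_add, mul_one]
  have hzero : ((4 : ℂ)⁻¹ • (tau t s * taud t s)) * (c • taud t s * ιE (toC ω)) = 0 := by
    simp only [smul_mul_assoc, mul_smul_comm, h0, smul_zero]
  rw [hzero, add_zero]
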